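/- Let F : ℝⁿ → S^ℓ be an affine linear matrix map and u, v ∈ ℝⁿ. Then (F(u) − F(v))² ⪯ λ_max(H) ‖u − v‖² I_ℓ, where H = M Mᵀ with M the vertical stack of the coefficient matrices F₁,...,Fₙ. -/

import Mathlib

open Matrix

lemma smul_one_sub_posSemidef {m : Type*} [Fintype m] [DecidableEq m]
    {A : Matrix m m ℝ} (hA : A.IsHermitian) {c : ℝ}
    (hc : ∀ i, hA.eigenvalues i ≤ c) :
    (c • (1 : Matrix m m ℝ) - A).PosSemidef := by
  have key : c • (1 : Matrix m m ℝ) - A =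
      (hA.eigenvectorUnitary : Matrix m m ℝ) *
        Matrix.diagonal (fun i => c - hA.eigenvalues i) *
        (hA.eigenvectorUnitary : Matrix m m ℝ)ᴴ := by
    have hUU : (hA.eigenvectorUnitary : Matrix m m ℝ) *
        star (hA.eigenvectorUnitary : Matrix m m ℝ) = 1 :=
      Matrix.mem_unitaryGroup_iff.mp hA.eigenvectorUnitary.2
    conv_lhs => rw [hA.spectral_theorem]
    have hd : Matrix.diagonal (fun i => c - hA.eigenvalues i)
        = c • (1 : Matrix m m ℝ) - Matrix.diagonal (RCLike.ofReal ∘ hA.eigenvalues) := by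
      ext i j
      by_cases h : i = j <;> simp [Matrix.diagonal, Matrix.one_apply, h]
    rw [hd, mul_sub, sub_mul]
    congr 1
    rw [Matrix.mul_smul, mul_one, Matrix.smul_mul]
    rw [show ((hA.eigenvectorUnitary : Matrix m m ℝ))ᴴ
        = star (hA.eigenvectorUnitary : Matrix m m ℝ) from rfl, hUU]
  rw [key]
  exact (Matrix.posSemidef_diagonal_iff.mpr fun i => sub_nonneg.mpr (hc i)
    ).mul_mul_conjTranspose_same _

/-- The vertical stack of matrices `F 1, ..., F n` into an `ℓn × ℓ` matrix. -/
def vstack {n ℓ : ℕ} (F : Fin n → Matrix (Fin ℓ) (Fin ℓ) ℝ) :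
    Matrix (Fin n × Fin ℓ) (Fin ℓ) ℝ :=
  Matrix.of fun p b => F p.1 p.2 b

/-- The Euclidean norm of a vector `w ∈ ℝⁿ`. -/
noncomputable def enorm' {n : ℕ} (w : Fin n → ℝ) : ℝ :=
  ‖(WithLp.equiv 2 (Fin n → ℝ)).symm w‖

/-- for the affine map `F(x) = F₀ + Σᵢ xᵢ Fᵢ`,
`(F(u) − F(v))² ⪯ λ_max(H) ‖u − v‖² I_ℓ` where `H = M Mᵀ` with `M` the vertical stack
of the coefficient matrices. -/
theorem sq_diff_le_lammax {n ℓ : ℕ}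
    (F₀ : Matrix (Fin ℓ) (Fin ℓ) ℝ) (F : Fin n → Matrix (Fin ℓ) (Fin ℓ) ℝ)
    (hF₀ : F₀.IsSymm) (hF : ∀ i, (F i).IsSymm)
    (Fmap : (Fin n → ℝ) → Matrix (Fin ℓ) (Fin ℓ) ℝ)
    (hFmap : ∀ x, Fmap x = F₀ + ∑ i, x i • F i)
    (H : Matrix (Fin n × Fin ℓ) (Fin n × Fin ℓ) ℝ)
    (hH : H = vstack F * (vstack F)ᵀ) (hHherm : H.IsHermitian)
    (u v : Fin n → ℝ) :
    Matrix.PosSemidef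
      (((⨆ i, hHherm.eigenvalues i) * (enorm' (u - v)) ^ 2) • (1 : Matrix (Fin ℓ) (Fin ℓ) ℝ)
        - (Fmap u - Fmap v) * (Fmap u - Fmap v)) := by
  set w : Fin n → ℝ := u - v with hw
  set c : ℝ := ⨆ i, hHherm.eigenvalues i with hc
  set W : Matrix (Fin n × Fin ℓ) (Fin ℓ) ℝ :=
    Matrix.of (fun p b => if p.2 = b then w p.1 else 0) with hWdef
  have hDsum : Fmap u - Fmap v = ∑ i, w i • F i := by
    rw [hFmap, hFmap, add_sub_add_left_eq_sub, ← Finset.sum_sub_distrib]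
    refine Finset.sum_congr rfl fun i _ => ?_
    rw [← sub_smul]; rfl
  have hD : Fmap u - Fmap v = Wᵀ * vstack F := by
    rw [hDsum]
    ext a b
    simp only [Matrix.mul_apply, Matrix.transpose_apply, hWdef, vstack, Matrix.of_apply,
      Matrix.sum_apply, Matrix.smul_apply, smul_eq_mul, Fintype.sum_prod_type]
    refine Finset.sum_congr rfl fun i _ => ?_
    simp [ite_mul]
  have hDsymm : (Fmap u - Fmap v)ᵀ = Fmap u - Fmap v := by
    rw [hDsum, Matrix.transpose_sum]
    refine Finset.sum_congr rfl fun i _ => ?_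
    rw [Matrix.transpose_smul, (hF i).eq]
  have hD2 : (vstack F)ᵀ * W = Fmap u - Fmap v := by
    have h1 : (Wᵀ * vstack F)ᵀ = (vstack F)ᵀ * W := by
      rw [Matrix.transpose_mul, Matrix.transpose_transpose]
    rw [← h1, ← hD, hDsymm]
  have hnorm : enorm' w ^ 2 = ∑ i, w i ^ 2 := by
    have h1 : enorm' w = Real.sqrt (∑ i, w i ^ 2) := by
      simp [enorm', EuclideanSpace.norm_eq, Real.norm_eq_abs, sq_abs]
    rw [h1, Real.sq_sqrt (by positivity)]
  have hWW : Wᵀ * W = (enorm' w ^ 2) • (1 : Matrix (Fin ℓ) (Fin ℓ) ℝ) := by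
    ext a b
    simp only [Matrix.mul_apply, Matrix.transpose_apply, hWdef, Matrix.of_apply,
      Fintype.sum_prod_type, Matrix.smul_apply, Matrix.one_apply, smul_eq_mul, hnorm]
    by_cases hab : a = b
    · subst hab
      simp [Finset.sum_ite_eq', pow_two]
    · rw [if_neg hab, mul_zero]
      refine Finset.sum_eq_zero fun i _ => Finset.sum_eq_zero fun x _ => ?_
      by_cases hx : x = a
      · subst hx; rw [if_neg hab, mul_zero]
      · rw [if_neg hx, zero_mul]
  have key : (c * enorm' w ^ 2) • (1 : Matrix (Fin ℓ) (Fin ℓ) ℝ)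
      - (Fmap u - Fmap v) * (Fmap u - Fmap v)
      = Wᵀ * (c • (1 : Matrix (Fin n × Fin ℓ) (Fin n × Fin ℓ) ℝ) - H) * W := by
    conv_rhs => rw [Matrix.mul_sub, Matrix.sub_mul, Matrix.mul_smul, Matrix.mul_one,
      Matrix.smul_mul, hWW, smul_smul, hH]
    congr 1
    rw [show Wᵀ * (vstack F * (vstack F)ᵀ) * W = (Wᵀ * vstack F) * ((vstack F)ᵀ * W) by
      simp only [Matrix.mul_assoc], ← hD, hD2]
  rw [key, show Wᵀ = Wᴴ from (Matrix.conjTranspose_eq_transpose_of_trivial W).symm]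
  refine Matrix.PosSemidef.conjTranspose_mul_mul_same ?_ W
  exact smul_one_sub_posSemidef hHherm fun i =>
    le_ciSup (Set.Finite.bddAbove (Set.finite_range _)) i
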